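/- Let G be an N-function with inverse G^{-1} and indices 1 < i_G ≤ s_G < ∞, and fix κ ∈ [1, i_G). Define h_κ^{-1}(t) = ∫_0^t [G^{-1}(τ)]^{-κ} dτ. Then −1 < −κ/i_G ≤ t (h_κ^{-1})''(t)/(h_κ^{-1})'(t) = −κ t (G^{-1})'(t)/G^{-1}(t) ≤ −κ/s_G < 0; in particular h_κ^{-1} is increasing and concave on [0,∞), and h_κ(G(t)/t^κ) ≈ G(t) with constants depending only on i_G, s_G, κ. -/

import Mathlib

open MeasureTheory intervalIntegral Set

section Aux
variable {G g Ginv Ginv' : ℝ → ℝ} {iG sG κ : ℝ}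

lemma aux_Gmono (hG' : ∀ t, 0 < t → HasDerivAt G (g t) t)
    (hgpos : ∀ t, 0 < t → 0 < g t) : StrictMonoOn G (Set.Ioi 0) := by
  apply strictMonoOn_of_deriv_pos (convex_Ioi 0)
  · intro x hx; exact (hG' x hx).continuousAt.continuousWithinAt
  · intro x hx
    rw [interior_Ioi] at hx
    rw [(hG' x hx).deriv]
    exact hgpos x hx

lemma aux_Ginv0 (hGpos : ∀ t, 0 < t → 0 < G t)
    (hGinv : ∀ t, 0 ≤ t → Ginv (G t) = t ∧ G (Ginv t) = t ∧ 0 ≤ Ginv t) : Ginv 0 = 0 := by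
  by_contra h
  have h0 : 0 < Ginv 0 := lt_of_le_of_ne (hGinv 0 le_rfl).2.2 (Ne.symm h)
  have := hGpos _ h0
  rw [(hGinv 0 le_rfl).2.1] at this
  exact lt_irrefl 0 this

lemma aux_Ginv_pos (hG' : ∀ t, 0 < t → HasDerivAt G (g t) t)
    (hGpos : ∀ t, 0 < t → 0 < G t) (hgpos : ∀ t, 0 < t → 0 < g t)
    (hGinv : ∀ t, 0 ≤ t → Ginv (G t) = t ∧ G (Ginv t) = t ∧ 0 ≤ Ginv t)
    (hGinv' : ∀ t, 0 < t → HasDerivAt Ginv (Ginv' t) t) :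
    ∀ t, 0 < t → 0 < Ginv t := by
  intro t ht
  rcases lt_or_eq_of_le (hGinv t ht.le).2.2 with h | h
  · exact h
  exfalso
  have hGmono := aux_Gmono hG' hgpos
  have hG0 : G 0 = t := by rw [h]; exact (hGinv t ht.le).2.1
  have ht2 : 0 < t / 2 := by linarith
  have hs0 : Ginv (t / 2) ≠ 0 := by
    intro heq
    have : G 0 = t / 2 := by rw [← heq]; exact (hGinv (t/2) ht2.le).2.1
    rw [hG0] at this; linarith
  have hspos : 0 < Ginv (t / 2) := lt_of_le_of_ne (hGinv (t/2) ht2.le).2.2 (Ne.symm hs0)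
  have key : ∀ τ ∈ Set.Ico (t/2) t, Ginv (t/2) ≤ Ginv τ := by
    intro τ hτ
    have hτpos : 0 < τ := lt_of_lt_of_le ht2 hτ.1
    have hτ0 : Ginv τ ≠ 0 := by
      intro heq
      have : G 0 = τ := by rw [← heq]; exact (hGinv τ hτpos.le).2.1
      rw [hG0] at this
      exact absurd this.symm (ne_of_lt hτ.2)
    have hτgpos : 0 < Ginv τ := lt_of_le_of_ne (hGinv τ hτpos.le).2.2 (Ne.symm hτ0)
    by_contra hlt
    push_neg at hlt
    have := hGmono (Set.mem_Ioi.2 hτgpos) (Set.mem_Ioi.2 hspos) hlt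
    rw [(hGinv τ hτpos.le).2.1, (hGinv (t/2) ht2.le).2.1] at this
    linarith [hτ.1]
  have hlim : Filter.Tendsto Ginv (nhdsWithin t (Set.Iio t)) (nhds 0) := by
    have := (hGinv' t ht).continuousAt.tendsto
    rw [← h] at this
    exact this.mono_left nhdsWithin_le_nhds
  have hev : ∀ᶠ τ in nhdsWithin t (Set.Iio t), Ginv (t/2) ≤ Ginv τ := by
    filter_upwards [Ico_mem_nhdsLT_of_mem (a := t/2) (c := t) ⟨by linarith, le_rfl⟩] with τ hτ
    exact key τ hτ
  have := ge_of_tendsto hlim hev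
  linarith


lemma aux_Ginv_mono (hG' : ∀ t, 0 < t → HasDerivAt G (g t) t)
    (hGpos : ∀ t, 0 < t → 0 < G t) (hgpos : ∀ t, 0 < t → 0 < g t)
    (hGinv : ∀ t, 0 ≤ t → Ginv (G t) = t ∧ G (Ginv t) = t ∧ 0 ≤ Ginv t)
    (hGinv' : ∀ t, 0 < t → HasDerivAt Ginv (Ginv' t) t) :
    ∀ a b : ℝ, 0 ≤ a → a ≤ b → Ginv a ≤ Ginv b := by
  intro a b ha hab
  rcases eq_or_lt_of_le ha with h0 | h0
  · rw [← h0]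
    rw [aux_Ginv0 hGpos hGinv]
    rcases eq_or_lt_of_le (le_trans ha hab) with hb | hb
    · rw [← hb, aux_Ginv0 hGpos hGinv]
    · exact (hGinv b hb.le).2.2
  by_contra hlt
  push_neg at hlt
  have hb : 0 < b := lt_of_lt_of_le h0 hab
  have hpa := aux_Ginv_pos hG' hGpos hgpos hGinv hGinv' a h0
  have hpb := aux_Ginv_pos hG' hGpos hgpos hGinv hGinv' b hb
  have := aux_Gmono hG' hgpos (Set.mem_Ioi.2 hpb) (Set.mem_Ioi.2 hpa) hlt
  rw [(hGinv a h0.le).2.1, (hGinv b hb.le).2.1] at this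
  linarith

lemma aux_chain (hG' : ∀ t, 0 < t → HasDerivAt G (g t) t)
    (hGpos : ∀ t, 0 < t → 0 < G t) (hgpos : ∀ t, 0 < t → 0 < g t)
    (hGinv : ∀ t, 0 ≤ t → Ginv (G t) = t ∧ G (Ginv t) = t ∧ 0 ≤ Ginv t)
    (hGinv' : ∀ t, 0 < t → HasDerivAt Ginv (Ginv' t) t) :
    ∀ t, 0 < t → g (Ginv t) * Ginv' t = 1 := by
  intro t ht
  have hs : 0 < Ginv t := aux_Ginv_pos hG' hGpos hgpos hGinv hGinv' t ht
  have hc : HasDerivAt (G ∘ Ginv) (g (Ginv t) * Ginv' t) t := (hG' _ hs).comp t (hGinv' t ht)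
  have heq : (fun τ => τ) =ᶠ[nhds t] (G ∘ Ginv) := by
    filter_upwards [Ioi_mem_nhds ht] with τ hτ
    exact ((hGinv τ (le_of_lt hτ)).2.1).symm
  have hid : HasDerivAt (fun τ : ℝ => τ) (g (Ginv t) * Ginv' t) t := hc.congr_of_eventuallyEq heq
  exact (hid.unique (hasDerivAt_id t))

lemma aux_Bmono (hG' : ∀ t, 0 < t → HasDerivAt G (g t) t)
    (hGpos : ∀ t, 0 < t → 0 < G t) (hgpos : ∀ t, 0 < t → 0 < g t)
    (hiG : 0 < iG)
    (hbd1 : ∀ t, 0 < t → iG * G t ≤ t * g t) :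
    ∀ u v : ℝ, 0 < u → u ≤ v → G u * v ^ iG ≤ G v * u ^ iG := by
  have hF : ∀ x : ℝ, 0 < x → HasDerivAt (fun y => Real.log (G y) - iG * Real.log y)
      (g x / G x - iG * x⁻¹) x := by
    intro x hx
    exact ((hG' x hx).log (hGpos x hx).ne').sub ((Real.hasDerivAt_log hx.ne').const_mul iG)
  have hmonoF : MonotoneOn (fun y => Real.log (G y) - iG * Real.log y) (Set.Ioi 0) := by
    apply monotoneOn_of_deriv_nonneg (convex_Ioi 0)
    · intro x hx; exact (hF x hx).continuousAt.continuousWithinAt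
    · intro x hx
      rw [interior_Ioi] at hx
      exact (hF x hx).differentiableAt.differentiableWithinAt
    · intro x hx
      rw [interior_Ioi] at hx
      rw [(hF x hx).deriv, sub_nonneg, ← div_eq_mul_inv, div_le_div_iff₀ hx (hGpos x hx)]
      have := hbd1 x hx
      nlinarith
  intro u v hu huv
  have hv : 0 < v := lt_of_lt_of_le hu huv
  have h := hmonoF (Set.mem_Ioi.2 hu) (Set.mem_Ioi.2 hv) huv
  have hlog : Real.log (G u * v ^ iG) ≤ Real.log (G v * u ^ iG) := by
    rw [Real.log_mul (hGpos u hu).ne' (Real.rpow_pos_of_pos hv iG).ne',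
        Real.log_mul (hGpos v hv).ne' (Real.rpow_pos_of_pos hu iG).ne',
        Real.log_rpow hv, Real.log_rpow hu]
    dsimp at h
    linarith
  exact (Real.log_le_log_iff (mul_pos (hGpos u hu) (Real.rpow_pos_of_pos hv iG)) (mul_pos (hGpos v hv) (Real.rpow_pos_of_pos hu iG))).1 hlog

-- lower bound for Ginv: Ginv b * (a/b)^(1/iG) ≤ Ginv a for 0 < a ≤ b
lemma aux_GinvLB (hG' : ∀ t, 0 < t → HasDerivAt G (g t) t)
    (hGpos : ∀ t, 0 < t → 0 < G t) (hgpos : ∀ t, 0 < t → 0 < g t)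
    (hiG : 0 < iG)
    (hbd1 : ∀ t, 0 < t → iG * G t ≤ t * g t)
    (hGinv : ∀ t, 0 ≤ t → Ginv (G t) = t ∧ G (Ginv t) = t ∧ 0 ≤ Ginv t)
    (hGinv' : ∀ t, 0 < t → HasDerivAt Ginv (Ginv' t) t) :
    ∀ a b : ℝ, 0 < a → a ≤ b → Ginv b * (a / b) ^ (1/iG) ≤ Ginv a := by
  intro a b ha hab
  have hb : 0 < b := lt_of_lt_of_le ha hab
  have hu : 0 < Ginv a := aux_Ginv_pos hG' hGpos hgpos hGinv hGinv' a ha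
  have hv : 0 < Ginv b := aux_Ginv_pos hG' hGpos hgpos hGinv hGinv' b hb
  have huv : Ginv a ≤ Ginv b := aux_Ginv_mono hG' hGpos hgpos hGinv hGinv' a b ha.le hab
  have hB := aux_Bmono hG' hGpos hgpos hiG hbd1 (Ginv a) (Ginv b) hu huv
  rw [(hGinv a ha.le).2.1, (hGinv b hb.le).2.1] at hB
  -- hB : a * Ginv b ^ iG ≤ b * Ginv a ^ iG
  have hdivpos : 0 < a / b := div_pos ha hb
  have hwpow : (Ginv b * (a / b) ^ (1/iG)) ^ iG = Ginv b ^ iG * (a / b) := by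
    rw [Real.mul_rpow hv.le (Real.rpow_nonneg hdivpos.le _),
        ← Real.rpow_mul hdivpos.le, one_div_mul_cancel hiG.ne', Real.rpow_one]
  by_contra hlt
  push_neg at hlt
  have hstep := Real.rpow_lt_rpow hu.le hlt hiG
  rw [hwpow] at hstep
  have hkey : Ginv b ^ iG * (a / b) * b = Ginv b ^ iG * a := by field_simp
  nlinarith [Real.rpow_pos_of_pos hu iG, hstep, hB]

lemma aux_Dbound (hG' : ∀ t, 0 < t → HasDerivAt G (g t) t)
    (hGpos : ∀ t, 0 < t → 0 < G t) (hgpos : ∀ t, 0 < t → 0 < g t)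
    (hiG : 0 < iG) (hκ : 0 < κ)
    (hbd1 : ∀ t, 0 < t → iG * G t ≤ t * g t)
    (hGinv : ∀ t, 0 ≤ t → Ginv (G t) = t ∧ G (Ginv t) = t ∧ 0 ≤ Ginv t)
    (hGinv' : ∀ t, 0 < t → HasDerivAt Ginv (Ginv' t) t) :
    ∀ T, 0 < T → ∀ τ, 0 < τ → τ ≤ T →
      Ginv τ ^ (-κ) ≤ (Ginv T ^ (-κ) * T ^ (κ/iG)) * τ ^ (-(κ/iG)) := by
  intro T hT τ hτ hτT
  have hvT : 0 < Ginv T := aux_Ginv_pos hG' hGpos hgpos hGinv hGinv' T hT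
  have hdiv : 0 < τ / T := div_pos hτ hT
  have hw : 0 < Ginv T * (τ/T) ^ (1/iG) := mul_pos hvT (Real.rpow_pos_of_pos hdiv _)
  have hwle := aux_GinvLB hG' hGpos hgpos hiG hbd1 hGinv hGinv' τ T hτ hτT
  have hstep : Ginv τ ^ (-κ) ≤ (Ginv T * (τ/T) ^ (1/iG)) ^ (-κ) :=
    Real.rpow_le_rpow_of_nonpos hw hwle (neg_nonpos.2 hκ.le)
  refine le_trans hstep (le_of_eq ?_)
  rw [Real.mul_rpow hvT.le (Real.rpow_nonneg hdiv.le _), ← Real.rpow_mul hdiv.le,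
      show 1/iG * -κ = -(κ/iG) by ring,
      Real.div_rpow hτ.le hT.le, Real.rpow_neg hT.le (κ/iG)]
  have hne := (Real.rpow_pos_of_pos hT (κ/iG)).ne'
  field_simp

lemma aux_contAt (hGpos : ∀ t, 0 < t → 0 < G t) (hgpos : ∀ t, 0 < t → 0 < g t)
    (hG' : ∀ t, 0 < t → HasDerivAt G (g t) t)
    (hGinv : ∀ t, 0 ≤ t → Ginv (G t) = t ∧ G (Ginv t) = t ∧ 0 ≤ Ginv t)
    (hGinv' : ∀ t, 0 < t → HasDerivAt Ginv (Ginv' t) t) :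
    ∀ x, 0 < x → ContinuousAt (fun τ => Ginv τ ^ (-κ)) x := by
  intro x hx
  have h1 : ContinuousAt (fun y : ℝ => y ^ (-κ)) (Ginv x) :=
    Real.continuousAt_rpow_const _ _
      (Or.inl (aux_Ginv_pos hG' hGpos hgpos hGinv hGinv' x hx).ne')
  exact h1.comp (hGinv' x hx).continuousAt

lemma aux_int (hG' : ∀ t, 0 < t → HasDerivAt G (g t) t)
    (hGpos : ∀ t, 0 < t → 0 < G t) (hgpos : ∀ t, 0 < t → 0 < g t)
    (hiG : 0 < iG) (hκ : 0 < κ) (hκiG : κ < iG)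
    (hbd1 : ∀ t, 0 < t → iG * G t ≤ t * g t)
    (hGinv : ∀ t, 0 ≤ t → Ginv (G t) = t ∧ G (Ginv t) = t ∧ 0 ≤ Ginv t)
    (hGinv' : ∀ t, 0 < t → HasDerivAt Ginv (Ginv' t) t) :
    ∀ T, 0 < T → IntervalIntegrable (fun τ => Ginv τ ^ (-κ)) volume 0 T := by
  intro T hT
  have hexp : (-1 : ℝ) < -(κ/iG) := by
    have : κ / iG < 1 := (div_lt_one hiG).2 hκiG
    linarith
  rw [intervalIntegrable_iff_integrableOn_Ioc_of_le hT.le]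
  have hbnd : IntegrableOn (fun τ : ℝ => (Ginv T ^ (-κ) * T ^ (κ/iG)) * τ ^ (-(κ/iG)))
      (Set.Ioc 0 T) volume := by
    have h1 : IntervalIntegrable (fun τ : ℝ => τ ^ (-(κ/iG))) volume 0 T :=
      intervalIntegral.intervalIntegrable_rpow' hexp
    have h2 := h1.const_mul (Ginv T ^ (-κ) * T ^ (κ/iG))
    rwa [intervalIntegrable_iff_integrableOn_Ioc_of_le hT.le] at h2
  refine Integrable.mono' hbnd ?_ ?_
  · apply ContinuousOn.aestronglyMeasurable ?_ measurableSet_Ioc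
    intro x hx
    exact (aux_contAt hGpos hgpos hG' hGinv hGinv' x hx.1).continuousWithinAt
  · rw [ae_restrict_iff' measurableSet_Ioc]
    refine Filter.Eventually.of_forall (fun τ hτ => ?_)
    rw [Real.norm_eq_abs, abs_of_nonneg (Real.rpow_nonneg ((hGinv τ hτ.1.le).2.2) _)]
    exact aux_Dbound hG' hGpos hgpos hiG hκ hbd1 hGinv hGinv' T hT τ hτ.1 hτ.2

lemma aux_deriv (hG' : ∀ t, 0 < t → HasDerivAt G (g t) t)
    (hGpos : ∀ t, 0 < t → 0 < G t) (hgpos : ∀ t, 0 < t → 0 < g t)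
    (hiG : 0 < iG) (hκ : 0 < κ) (hκiG : κ < iG)
    (hbd1 : ∀ t, 0 < t → iG * G t ≤ t * g t)
    (hGinv : ∀ t, 0 ≤ t → Ginv (G t) = t ∧ G (Ginv t) = t ∧ 0 ≤ Ginv t)
    (hGinv' : ∀ t, 0 < t → HasDerivAt Ginv (Ginv' t) t) :
    ∀ x, 0 < x → HasDerivAt (fun u => ∫ τ in (0:ℝ)..u, Ginv τ ^ (-κ)) (Ginv x ^ (-κ)) x := by
  intro x hx
  have hmeas : StronglyMeasurableAtFilter (fun τ => Ginv τ ^ (-κ)) (nhds x) volume := by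
    refine ContinuousOn.stronglyMeasurableAtFilter isOpen_Ioi ?_ x hx
    intro y hy
    exact (aux_contAt hGpos hgpos hG' hGinv hGinv' y hy).continuousWithinAt
  exact intervalIntegral.integral_hasDerivAt_right
    (aux_int hG' hGpos hgpos hiG hκ hκiG hbd1 hGinv hGinv' x hx) hmeas
    (aux_contAt hGpos hgpos hG' hGinv hGinv' x hx)

lemma aux_contOn (hG' : ∀ t, 0 < t → HasDerivAt G (g t) t)
    (hGpos : ∀ t, 0 < t → 0 < G t) (hgpos : ∀ t, 0 < t → 0 < g t)
    (hiG : 0 < iG) (hκ : 0 < κ) (hκiG : κ < iG)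
    (hbd1 : ∀ t, 0 < t → iG * G t ≤ t * g t)
    (hGinv : ∀ t, 0 ≤ t → Ginv (G t) = t ∧ G (Ginv t) = t ∧ 0 ≤ Ginv t)
    (hGinv' : ∀ t, 0 < t → HasDerivAt Ginv (Ginv' t) t) :
    ContinuousOn (fun u => ∫ τ in (0:ℝ)..u, Ginv τ ^ (-κ)) (Set.Ici 0) := by
  intro x hx
  have hx1 : (0:ℝ) < x + 1 := by
    have : (0:ℝ) ≤ x := hx
    linarith
  have hIcc : ContinuousOn (fun u => ∫ τ in (0:ℝ)..u, Ginv τ ^ (-κ)) (Set.uIcc 0 (x+1)) :=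
    intervalIntegral.continuousOn_primitive_interval'
      (aux_int hG' hGpos hgpos hiG hκ hκiG hbd1 hGinv hGinv' (x+1) hx1)
      (by rw [Set.uIcc_of_le hx1.le]; exact Set.left_mem_Icc.2 hx1.le)
  rw [Set.uIcc_of_le hx1.le] at hIcc
  have hmem : Set.Icc (0:ℝ) (x+1) ∈ nhdsWithin x (Set.Ici 0) := by
    rw [mem_nhdsWithin]
    refine ⟨Set.Iio (x+1), isOpen_Iio, by simp, fun y hy => ⟨hy.2, hy.1.le⟩⟩
  exact (hIcc.continuousWithinAt ⟨hx, by simpa using le_of_lt (by linarith : x < x + 1)⟩).mono_of_mem_nhdsWithin hmem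

lemma aux_low (hG' : ∀ t, 0 < t → HasDerivAt G (g t) t)
    (hGpos : ∀ t, 0 < t → 0 < G t) (hgpos : ∀ t, 0 < t → 0 < g t)
    (hiG : 0 < iG) (hκ : 0 < κ) (hκiG : κ < iG)
    (hbd1 : ∀ t, 0 < t → iG * G t ≤ t * g t)
    (hGinv : ∀ t, 0 ≤ t → Ginv (G t) = t ∧ G (Ginv t) = t ∧ 0 ≤ Ginv t)
    (hGinv' : ∀ t, 0 < t → HasDerivAt Ginv (Ginv' t) t) :
    ∀ x, 0 < x → x * Ginv x ^ (-κ) ≤ ∫ τ in (0:ℝ)..x, Ginv τ ^ (-κ) := by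
  intro x hx
  have hc : IntervalIntegrable (fun _ : ℝ => Ginv x ^ (-κ)) volume 0 x :=
    intervalIntegrable_const
  have hae : (fun _ : ℝ => Ginv x ^ (-κ)) ≤ᵐ[volume.restrict (Set.Icc 0 x)]
      (fun τ => Ginv τ ^ (-κ)) := by
    refine (ae_restrict_iff' measurableSet_Icc).2 ?_
    have h0 : ∀ᵐ τ : ℝ, τ ≠ 0 := by
      rw [MeasureTheory.ae_iff]
      simpa using Real.volume_singleton
    filter_upwards [h0] with τ hτ0 hτ
    have hτpos : 0 < τ := lt_of_le_of_ne hτ.1 (Ne.symm hτ0)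
    exact Real.rpow_le_rpow_of_nonpos
      (aux_Ginv_pos hG' hGpos hgpos hGinv hGinv' τ hτpos)
      (aux_Ginv_mono hG' hGpos hgpos hGinv hGinv' τ x hτpos.le hτ.2)
      (neg_nonpos.2 hκ.le)
  have := intervalIntegral.integral_mono_ae_restrict hx.le hc
    (aux_int hG' hGpos hgpos hiG hκ hκiG hbd1 hGinv hGinv' x hx) hae
  rwa [intervalIntegral.integral_const, sub_zero, smul_eq_mul] at this

lemma aux_upp (hG' : ∀ t, 0 < t → HasDerivAt G (g t) t)
    (hGpos : ∀ t, 0 < t → 0 < G t) (hgpos : ∀ t, 0 < t → 0 < g t)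
    (hiG : 0 < iG) (hκ : 0 < κ) (hκiG : κ < iG)
    (hbd1 : ∀ t, 0 < t → iG * G t ≤ t * g t)
    (hGinv : ∀ t, 0 ≤ t → Ginv (G t) = t ∧ G (Ginv t) = t ∧ 0 ≤ Ginv t)
    (hGinv' : ∀ t, 0 < t → HasDerivAt Ginv (Ginv' t) t) :
    ∀ x, 0 < x → (∫ τ in (0:ℝ)..x, Ginv τ ^ (-κ)) ≤ (iG/(iG-κ)) * (x * Ginv x ^ (-κ)) := by
  intro x hx
  have hexp : (-1 : ℝ) < -(κ/iG) := by
    have : κ / iG < 1 := (div_lt_one hiG).2 hκiG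
    linarith
  set K := Ginv x ^ (-κ) * x ^ (κ/iG) with hK
  have hb : IntervalIntegrable (fun τ : ℝ => K * τ ^ (-(κ/iG))) volume 0 x :=
    (intervalIntegral.intervalIntegrable_rpow' hexp).const_mul K
  have hae : (fun τ => Ginv τ ^ (-κ)) ≤ᵐ[volume.restrict (Set.Icc 0 x)]
      (fun τ : ℝ => K * τ ^ (-(κ/iG))) := by
    refine (ae_restrict_iff' measurableSet_Icc).2 ?_
    have h0 : ∀ᵐ τ : ℝ, τ ≠ 0 := by
      rw [MeasureTheory.ae_iff]
      simpa using Real.volume_singleton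
    filter_upwards [h0] with τ hτ0 hτ
    have hτpos : 0 < τ := lt_of_le_of_ne hτ.1 (Ne.symm hτ0)
    exact aux_Dbound hG' hGpos hgpos hiG hκ hbd1 hGinv hGinv' x hx τ hτpos hτ.2
  have hm := intervalIntegral.integral_mono_ae_restrict hx.le
    (aux_int hG' hGpos hgpos hiG hκ hκiG hbd1 hGinv hGinv' x hx) hb hae
  rw [intervalIntegral.integral_const_mul, integral_rpow (Or.inl hexp)] at hm
  have hz : (0:ℝ) ^ (-(κ/iG) + 1) = 0 := Real.zero_rpow (by
    intro hcontra
    have : κ / iG = 1 := by linarith [hcontra]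
    rw [div_eq_one_iff_eq hiG.ne'] at this
    exact absurd this (ne_of_lt hκiG))
  rw [hz, sub_zero] at hm
  refine le_trans hm (le_of_eq ?_)
  have hxx : x ^ (κ/iG) * x ^ (-(κ/iG) + 1) = x := by
    rw [← Real.rpow_add hx]
    norm_num
  have hα : -(κ/iG) + 1 = (iG - κ)/iG := by field_simp; ring
  have hiGκ : (0:ℝ) < iG - κ := by linarith
  rw [hK, hα]
  rw [hα] at hxx
  field_simp
  linear_combination (Ginv x ^ (-κ)) * hxx

end Aux

/-- Properties of h_κ^{-1}(t) = ∫_0^t [G^{-1}(τ)]^{-κ} dτ for κ ∈ [1, i_G):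
the logarithmic derivative ratio lies in [−κ/i_G, −κ/s_G] ⊂ (−1,0), h_κ^{-1}
is increasing and concave on [0,∞), and h_κ(G(t)/t^κ) ≈ G(t). -/
theorem h_kappa_inv_properties
    (G g Ginv Ginv' : ℝ → ℝ) (iG sG κ : ℝ)
    (hG' : ∀ t, 0 < t → HasDerivAt G (g t) t)
    (hGpos : ∀ t, 0 < t → 0 < G t)
    (hgpos : ∀ t, 0 < t → 0 < g t)
    (h1 : 1 < iG) (hle : iG ≤ sG)
    (hbd : ∀ t, 0 < t → iG * G t ≤ t * g t ∧ t * g t ≤ sG * G t)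
    (hκ₁ : 1 ≤ κ) (hκ₂ : κ < iG)
    (hGinv : ∀ t, 0 ≤ t → Ginv (G t) = t ∧ G (Ginv t) = t ∧ 0 ≤ Ginv t)
    (hGinv' : ∀ t, 0 < t → HasDerivAt Ginv (Ginv' t) t)
    (hinv hκfun : ℝ → ℝ)
    (hhinv : ∀ t, hinv t = ∫ τ in (0:ℝ)..t, (Ginv τ) ^ (-κ))
    (hκinv : ∀ t, 0 ≤ t → hκfun (hinv t) = t ∧ hinv (hκfun t) = t) :
    (∀ t, 0 < t →
      -1 < -(κ / iG) ∧
      -(κ / iG) ≤ -(κ * t * Ginv' t / Ginv t) ∧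
      -(κ * t * Ginv' t / Ginv t) ≤ -(κ / sG) ∧
      -(κ / sG) < 0) ∧
    StrictMonoOn hinv (Set.Ici 0) ∧
    ConcaveOn ℝ (Set.Ici 0) hinv ∧
    ∃ c₁ c₂ : ℝ, 0 < c₁ ∧ 0 < c₂ ∧ ∀ t, 0 < t →
      c₁ * G t ≤ hκfun (G t / t ^ κ) ∧ hκfun (G t / t ^ κ) ≤ c₂ * G t := by
  have hiG0 : (0:ℝ) < iG := lt_trans one_pos h1
  have hsG0 : (0:ℝ) < sG := lt_of_lt_of_le hiG0 hle
  have hκ0 : (0:ℝ) < κ := lt_of_lt_of_le one_pos hκ₁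
  have hiGκ : (0:ℝ) < iG - κ := by linarith
  have hbd1 : ∀ t, 0 < t → iG * G t ≤ t * g t := fun t ht => (hbd t ht).1
  have hfun : hinv = fun u => ∫ τ in (0:ℝ)..u, Ginv τ ^ (-κ) := funext hhinv
  have hderiv : ∀ x, 0 < x → HasDerivAt hinv (Ginv x ^ (-κ)) x := by
    intro x hx
    rw [hfun]
    exact aux_deriv hG' hGpos hgpos hiG0 hκ0 hκ₂ hbd1 hGinv hGinv' x hx
  have hcont : ContinuousOn hinv (Set.Ici 0) := by
    rw [hfun]
    exact aux_contOn hG' hGpos hgpos hiG0 hκ0 hκ₂ hbd1 hGinv hGinv'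
  have hSM : StrictMonoOn hinv (Set.Ici 0) := by
    apply strictMonoOn_of_deriv_pos (convex_Ici 0) hcont
    intro x hx
    rw [interior_Ici] at hx
    rw [(hderiv x hx).deriv]
    exact Real.rpow_pos_of_pos (aux_Ginv_pos hG' hGpos hgpos hGinv hGinv' x hx) _
  have hCC : ConcaveOn ℝ (Set.Ici 0) hinv := by
    have hanti : AntitoneOn (deriv hinv) (interior (Set.Ici (0:ℝ))) := by
      intro a ha b hb hab
      rw [interior_Ici] at ha hb
      rw [(hderiv a ha).deriv, (hderiv b hb).deriv]
      exact Real.rpow_le_rpow_of_nonpos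
        (aux_Ginv_pos hG' hGpos hgpos hGinv hGinv' a ha)
        (aux_Ginv_mono hG' hGpos hgpos hGinv hGinv' a b ha.le hab)
        (neg_nonpos.2 hκ0.le)
    exact hanti.concaveOn_of_deriv (convex_Ici 0) hcont
      (fun x hx => by
        rw [interior_Ici] at hx
        exact (hderiv x hx).differentiableAt.differentiableWithinAt)
  refine ⟨?_, hSM, hCC, ?_⟩
  · intro t ht
    have hs : 0 < Ginv t := aux_Ginv_pos hG' hGpos hgpos hGinv hGinv' t ht
    have hgs : 0 < g (Ginv t) := hgpos _ hs
    have hchain := aux_chain hG' hGpos hgpos hGinv hGinv' t ht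
    have hGs : G (Ginv t) = t := (hGinv t ht.le).2.1
    have hbds := hbd (Ginv t) hs
    rw [hGs] at hbds
    have hGi' : Ginv' t = 1 / g (Ginv t) :=
      eq_one_div_of_mul_eq_one_left (by rw [mul_comm]; exact hchain)
    have hexpr : κ * t * Ginv' t / Ginv t = κ * t / (Ginv t * g (Ginv t)) := by
      rw [hGi']
      field_simp
    have h2 : κ * t / (Ginv t * g (Ginv t)) ≤ κ / iG := by
      rw [div_le_div_iff₀ (mul_pos hs hgs) hiG0]
      nlinarith [hbds.1]
    have h3 : κ / sG ≤ κ * t / (Ginv t * g (Ginv t)) := by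
      rw [div_le_div_iff₀ hsG0 (mul_pos hs hgs)]
      nlinarith [hbds.2]
    refine ⟨?_, ?_, ?_, ?_⟩
    · simpa using neg_lt_neg ((div_lt_one hiG0).2 hκ₂)
    · rw [hexpr]; exact neg_le_neg h2
    · rw [hexpr]; exact neg_le_neg h3
    · exact neg_lt_zero.2 (div_pos hκ0 hsG0)
  · set α := (iG - κ)/iG with hαdef
    have hα0 : 0 < α := div_pos hiGκ hiG0
    have hα1 : α ≤ 1 := by rw [hαdef, div_le_one hiG0]; linarith
    refine ⟨α ^ (1/α), 1, Real.rpow_pos_of_pos hα0 _, one_pos, ?_⟩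
    intro t ht
    set c₁ := α ^ (1/α) with hc₁def
    have hc₁0 : 0 < c₁ := Real.rpow_pos_of_pos hα0 _
    have hc₁1 : c₁ ≤ 1 := Real.rpow_le_one hα0.le hα1 (by positivity)
    have hc₁α : c₁ ^ α = α := by
      rw [hc₁def, ← Real.rpow_mul hα0.le, one_div, inv_mul_cancel₀ hα0.ne', Real.rpow_one]
    have hT : 0 < G t := hGpos t ht
    have htκ : 0 < t ^ κ := Real.rpow_pos_of_pos ht κ
    have hGinvT : Ginv (G t) = t := (hGinv t ht.le).1
    set T := G t with hTdef
    set s := T / t ^ κ with hsdef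
    have hs0 : 0 < s := div_pos hT htκ
    have h_up : s ≤ hinv T := by
      have hlow := aux_low hG' hGpos hgpos hiG0 hκ0 hκ₂ hbd1 hGinv hGinv' T hT
      rw [← hhinv T, hGinvT] at hlow
      refine le_trans (le_of_eq ?_) hlow
      rw [hsdef, Real.rpow_neg ht.le, div_eq_mul_inv]
    have hc₁T : 0 < c₁ * T := mul_pos hc₁0 hT
    have hc₁Tle : c₁ * T ≤ T := by nlinarith
    have h_lo : hinv (c₁ * T) ≤ s := by
      have hupp := aux_upp hG' hGpos hgpos hiG0 hκ0 hκ₂ hbd1 hGinv hGinv' (c₁*T) hc₁T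
      rw [← hhinv] at hupp
      have hLB := aux_GinvLB hG' hGpos hgpos hiG0 hbd1 hGinv hGinv' (c₁*T) T hc₁T hc₁Tle
      rw [hGinvT] at hLB
      have hrat : c₁ * T / T = c₁ := by field_simp
      rw [hrat] at hLB
      have htc : 0 < t * c₁ ^ (1/iG) := mul_pos ht (Real.rpow_pos_of_pos hc₁0 _)
      have hpow : Ginv (c₁*T) ^ (-κ) ≤ (t * c₁ ^ (1/iG)) ^ (-κ) :=
        Real.rpow_le_rpow_of_nonpos htc hLB (neg_nonpos.2 hκ0.le)
      have hexpand : (t * c₁ ^ (1/iG)) ^ (-κ) = t ^ (-κ) * c₁ ^ (-(κ/iG)) := by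
        rw [Real.mul_rpow ht.le (Real.rpow_nonneg hc₁0.le _), ← Real.rpow_mul hc₁0.le,
            show 1/iG * -κ = -(κ/iG) by ring]
      have hone : c₁ * c₁ ^ (-(κ/iG)) = α := by
        nth_rewrite 1 [← Real.rpow_one c₁]
        rw [← Real.rpow_add hc₁0, show (1:ℝ) + -(κ/iG) = α by rw [hαdef]; field_simp; ring]
        exact hc₁α
      calc hinv (c₁*T) ≤ (iG/(iG-κ)) * (c₁*T * Ginv (c₁*T) ^ (-κ)) := hupp
        _ ≤ (iG/(iG-κ)) * (c₁*T * (t ^ (-κ) * c₁ ^ (-(κ/iG)))) := by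
            refine mul_le_mul_of_nonneg_left ?_ (le_of_lt (div_pos hiG0 hiGκ))
            refine mul_le_mul_of_nonneg_left ?_ hc₁T.le
            rw [hexpand] at hpow
            exact hpow
        _ = s := by
            rw [hsdef]
            have h1 : iG/(iG-κ) = α⁻¹ := by rw [hαdef, inv_div]
            have h2 : c₁ * T * (t ^ (-κ) * c₁ ^ (-(κ/iG))) = α * T * (t ^ κ)⁻¹ := by
              rw [Real.rpow_neg ht.le, ← hone]; ring
            rw [h1, h2]
            field_simp
    have hIcc : ContinuousOn hinv (Set.Icc (c₁*T) T) :=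
      hcont.mono (fun y hy => le_trans hc₁T.le hy.1)
    obtain ⟨u, hu, huv⟩ := intermediate_value_Icc hc₁Tle hIcc ⟨h_lo, h_up⟩
    have hu0 : (0:ℝ) ≤ u := le_trans hc₁T.le hu.1
    have hκs : hκfun s = u := by rw [← huv]; exact (hκinv u hu0).1
    constructor
    · rw [hκs]; exact hu.1
    · rw [hκs, one_mul]; exact hu.2
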